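/- Let I₁ be the modified Bessel function of the first kind of order one. Then: (i) for all 0 < x < y, e^{x−y}(x/y) < I₁(x)/I₁(y) < e^{x−y}(y/x)^{1/2}; (ii) for every x > 0, x/2 ≤ I₁(x) ≤ (x/2)·cosh(x); (iii) for every x > 0, 0 ≤ I₁'(x) ≤ I₁(x) + I₁(x)/x. -/

import Mathlib

open MeasureTheory Set

noncomputable def besselI1 (x : ℝ) : ℝ :=
  ∑' k : ℕ, (1 / ((Nat.factorial k : ℝ) * (Nat.factorial (k + 1) : ℝ))) * (x / 2) ^ (2 * k + 1)

namespace BesselAux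

noncomputable def besselI0 (x : ℝ) : ℝ :=
  ∑' k : ℕ, (1 / ((Nat.factorial k : ℝ) * (Nat.factorial k : ℝ))) * (x / 2) ^ (2 * k)

noncomputable def T1 (k : ℕ) (x : ℝ) : ℝ :=
  (1 / ((Nat.factorial k : ℝ) * (Nat.factorial (k + 1) : ℝ))) * (x / 2) ^ (2 * k + 1)

noncomputable def T1' (k : ℕ) (x : ℝ) : ℝ :=
  (1 / ((Nat.factorial k : ℝ) * (Nat.factorial (k + 1) : ℝ))) *
    ((2 * k + 1) * (x / 2) ^ (2 * k) * (1 / 2))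

noncomputable def T0 (k : ℕ) (x : ℝ) : ℝ :=
  (1 / ((Nat.factorial k : ℝ) * (Nat.factorial k : ℝ))) * (x / 2) ^ (2 * k)

noncomputable def T0' (k : ℕ) (x : ℝ) : ℝ :=
  (1 / ((Nat.factorial k : ℝ) * (Nat.factorial k : ℝ))) *
    ((2 * k) * (x / 2) ^ (2 * k - 1) * (1 / 2))

lemma besselI1_eq (x : ℝ) : besselI1 x = ∑' k, T1 k x := rfl
lemma besselI0_eq (x : ℝ) : besselI0 x = ∑' k, T0 k x := rfl

lemma fact_pos (k : ℕ) : (0:ℝ) < (Nat.factorial k : ℝ) := by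
  exact_mod_cast k.factorial_pos

lemma one_le_fact (k : ℕ) : (1:ℝ) ≤ (Nat.factorial k : ℝ) := by
  exact_mod_cast Nat.one_le_iff_ne_zero.mpr k.factorial_ne_zero

lemma succ_le_fact (k : ℕ) : ((k:ℝ) + 1) ≤ (Nat.factorial (k+1) : ℝ) := by
  exact_mod_cast Nat.self_le_factorial (k+1)

lemma summable_of_bound (f : ℕ → ℝ) (C r : ℝ)
    (h : ∀ k, |f k| ≤ C * r ^ k / (Nat.factorial k : ℝ)) : Summable f := by
  apply Summable.of_norm_bounded (g := fun k => C * r ^ k / (Nat.factorial k : ℝ)) ?_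
    (by simpa using h)
  have := (Real.summable_pow_div_factorial r).mul_left C
  simpa [mul_div_assoc] using this

lemma abs_even_pow (x : ℝ) (k : ℕ) : |(x/2) ^ (2*k)| = ((x/2)^2) ^ k := by
  rw [abs_pow, pow_mul, sq_abs]

lemma summable_T1 (x : ℝ) : Summable (fun k => T1 k x) := by
  apply summable_of_bound _ (|x| / 2) ((x / 2) ^ 2)
  intro k
  have hp : (0:ℝ) ≤ ((x/2)^2) ^ k := by positivity
  have h1 : |T1 k x| = (1 / ((Nat.factorial k : ℝ) * (Nat.factorial (k+1) : ℝ))) *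
      (((x/2)^2) ^ k * (|x|/2)) := by
    rw [T1, abs_mul, pow_add, pow_one, abs_mul, abs_even_pow,
      abs_of_pos (by positivity : (0:ℝ) < 1 / ((Nat.factorial k : ℝ) * (Nat.factorial (k+1) : ℝ))),
      abs_div, abs_two]
  have key : (1:ℝ) / ((Nat.factorial k : ℝ) * (Nat.factorial (k+1) : ℝ)) ≤ 1 / (Nat.factorial k : ℝ) := by
    apply one_div_le_one_div_of_le (fact_pos k)
    nlinarith [fact_pos k, one_le_fact (k+1)]
  rw [h1]
  calc (1 / ((Nat.factorial k : ℝ) * (Nat.factorial (k+1) : ℝ))) * (((x/2)^2) ^ k * (|x|/2))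
      ≤ (1 / (Nat.factorial k : ℝ)) * (((x/2)^2) ^ k * (|x|/2)) :=
        mul_le_mul_of_nonneg_right key (by positivity)
    _ = |x| / 2 * ((x/2)^2) ^ k / (Nat.factorial k : ℝ) := by ring

lemma summable_T0 (x : ℝ) : Summable (fun k => T0 k x) := by
  apply summable_of_bound _ 1 ((x / 2) ^ 2)
  intro k
  have h1 : |T0 k x| = (1 / ((Nat.factorial k : ℝ) * (Nat.factorial k : ℝ))) *
      ((x/2)^2) ^ k := by
    rw [T0, abs_mul, abs_even_pow,
      abs_of_pos (by positivity : (0:ℝ) < 1 / ((Nat.factorial k : ℝ) * (Nat.factorial k : ℝ)))]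
  have key : (1:ℝ) / ((Nat.factorial k : ℝ) * (Nat.factorial k : ℝ)) ≤ 1 / (Nat.factorial k : ℝ) := by
    apply one_div_le_one_div_of_le (fact_pos k)
    nlinarith [fact_pos k, one_le_fact k]
  rw [h1]
  calc (1 / ((Nat.factorial k : ℝ) * (Nat.factorial k : ℝ))) * ((x/2)^2) ^ k
      ≤ (1 / (Nat.factorial k : ℝ)) * ((x/2)^2) ^ k :=
        mul_le_mul_of_nonneg_right key (by positivity)
    _ = 1 * ((x/2)^2) ^ k / (Nat.factorial k : ℝ) := by ring

lemma bound_T1' (x : ℝ) (R : ℝ) (hR : 2 ≤ R) (hx : |x| ≤ R) (k : ℕ) :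
    |T1' k x| ≤ 1 * ((R/2)^2) ^ k / (Nat.factorial k : ℝ) := by
  have hRpos : (0:ℝ) < R := lt_of_lt_of_le (by norm_num) hR
  have habs : |x/2| ≤ R/2 := by rw [abs_div, abs_two]; linarith
  have hple : ((x/2)^2) ^ k ≤ ((R/2)^2) ^ k := by
    apply pow_le_pow_left₀ (by positivity)
    rw [← sq_abs (x/2)]
    apply pow_le_pow_left₀ (abs_nonneg _) habs
  have hp : (0:ℝ) ≤ ((x/2)^2) ^ k := by positivity
  have h1 : |T1' k x| = (1 / ((Nat.factorial k : ℝ) * (Nat.factorial (k+1) : ℝ))) *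
      ((2 * k + 1) * ((x/2)^2) ^ k * (1/2)) := by
    rw [T1', abs_mul, abs_mul, abs_mul, abs_even_pow,
      abs_of_pos (by positivity : (0:ℝ) < 1 / ((Nat.factorial k : ℝ) * (Nat.factorial (k+1) : ℝ))),
      abs_of_pos (by positivity : (0:ℝ) < 2 * (k:ℝ) + 1),
      abs_of_pos (by norm_num : (0:ℝ) < (1:ℝ)/2)]
  have key : (1 / ((Nat.factorial k : ℝ) * (Nat.factorial (k+1) : ℝ))) * ((2 * (k:ℝ) + 1) * (1/2))
      ≤ 1 / (Nat.factorial k : ℝ) := by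
    rw [div_mul_eq_mul_div, one_mul, div_le_div_iff₀ (by positivity) (fact_pos k)]
    have h2 := succ_le_fact k
    have h3 := fact_pos k
    have h4 := one_le_fact (k+1)
    nlinarith
  rw [h1]
  calc (1 / ((Nat.factorial k : ℝ) * (Nat.factorial (k+1) : ℝ))) *
        ((2 * k + 1) * ((x/2)^2) ^ k * (1/2))
      = ((1 / ((Nat.factorial k : ℝ) * (Nat.factorial (k+1) : ℝ))) * ((2 * (k:ℝ) + 1) * (1/2))) *
        ((x/2)^2) ^ k := by ring
    _ ≤ (1 / (Nat.factorial k : ℝ)) * ((R/2)^2) ^ k := by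
        apply mul_le_mul (le_refl _ |>.trans key) hple hp (by positivity)
    _ = 1 * ((R/2)^2) ^ k / (Nat.factorial k : ℝ) := by ring

lemma summable_T1' (x : ℝ) : Summable (fun k => T1' k x) :=
  summable_of_bound _ 1 (((|x|+2)/2)^2)
    (bound_T1' x (|x|+2) (by linarith [abs_nonneg x]) (by linarith [abs_nonneg x]))

lemma bound_T0' (x : ℝ) (R : ℝ) (hR : 2 ≤ R) (hx : |x| ≤ R) (k : ℕ) :
    |T0' k x| ≤ 1 * ((R/2)^2) ^ k / (Nat.factorial k : ℝ) := by
  have hRpos : (0:ℝ) < R := lt_of_lt_of_le (by norm_num) hR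
  have hhalf : (1:ℝ) ≤ R/2 := by linarith
  have habs : |x/2| ≤ R/2 := by rw [abs_div, abs_two]; linarith
  have h1 : |T0' k x| = (1 / ((Nat.factorial k : ℝ) * (Nat.factorial k : ℝ))) *
      ((2 * k) * |x/2| ^ (2 * k - 1) * (1/2)) := by
    rw [T0', abs_mul, abs_mul, abs_mul, abs_pow,
      abs_of_pos (by positivity : (0:ℝ) < 1 / ((Nat.factorial k : ℝ) * (Nat.factorial k : ℝ))),
      abs_of_nonneg (by positivity : (0:ℝ) ≤ 2 * (k:ℝ)),
      abs_of_pos (by norm_num : (0:ℝ) < (1:ℝ)/2)]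
  have hpowle : |x/2| ^ (2 * k - 1) ≤ (R/2) ^ (2*k) := by
    calc |x/2| ^ (2 * k - 1) ≤ (R/2) ^ (2*k-1) :=
          pow_le_pow_left₀ (abs_nonneg _) habs _
      _ ≤ (R/2) ^ (2*k) := pow_le_pow_right₀ hhalf (Nat.sub_le _ _)
  have key : (1 / ((Nat.factorial k : ℝ) * (Nat.factorial k : ℝ))) * ((2 * (k:ℝ)) * (1/2))
      ≤ 1 / (Nat.factorial k : ℝ) := by
    rw [div_mul_eq_mul_div, one_mul, div_le_div_iff₀ (by positivity) (fact_pos k)]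
    have h2 : (k:ℝ) ≤ (Nat.factorial k : ℝ) := by exact_mod_cast Nat.self_le_factorial k
    have h3 := fact_pos k
    have h4 := one_le_fact k
    nlinarith
  rw [h1]
  calc (1 / ((Nat.factorial k : ℝ) * (Nat.factorial k : ℝ))) *
        ((2 * k) * |x/2| ^ (2*k-1) * (1/2))
      = ((1 / ((Nat.factorial k : ℝ) * (Nat.factorial k : ℝ))) * ((2 * (k:ℝ)) * (1/2))) *
        |x/2| ^ (2*k-1) := by ring
    _ ≤ (1 / (Nat.factorial k : ℝ)) * (R/2) ^ (2*k) := by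
        apply mul_le_mul (le_refl _ |>.trans key) hpowle (by positivity) (by positivity)
    _ = 1 * ((R/2)^2) ^ k / (Nat.factorial k : ℝ) := by rw [← pow_mul]; ring

lemma summable_T0' (x : ℝ) : Summable (fun k => T0' k x) :=
  summable_of_bound _ 1 (((|x|+2)/2)^2)
    (bound_T0' x (|x|+2) (by linarith [abs_nonneg x]) (by linarith [abs_nonneg x]))

lemma summable_Crk (C r : ℝ) : Summable (fun k : ℕ => C * r ^ k / (Nat.factorial k : ℝ)) := by
  have := (Real.summable_pow_div_factorial r).mul_left C
  simpa [mul_div_assoc] using this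

lemma hasDerivAt_T1 (k : ℕ) (x : ℝ) : HasDerivAt (fun y => T1 k y) (T1' k x) x := by
  have h : HasDerivAt (fun y : ℝ => y / 2) (1/2) x := (hasDerivAt_id x).div_const 2
  have h2 := (h.pow (2*k+1)).const_mul
    (1 / ((Nat.factorial k : ℝ) * (Nat.factorial (k+1) : ℝ)))
  refine HasDerivAt.congr_deriv h2 ?_
  rw [T1']
  have : 2*k+1-1 = 2*k := by omega
  rw [this]
  push_cast
  ring

lemma hasDerivAt_T0 (k : ℕ) (x : ℝ) : HasDerivAt (fun y => T0 k y) (T0' k x) x := by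
  have h : HasDerivAt (fun y : ℝ => y / 2) (1/2) x := (hasDerivAt_id x).div_const 2
  have h2 := (h.pow (2*k)).const_mul
    (1 / ((Nat.factorial k : ℝ) * (Nat.factorial k : ℝ)))
  refine HasDerivAt.congr_deriv h2 ?_
  rw [T0']
  push_cast
  ring

lemma besselI1_hasDerivAt (x : ℝ) : HasDerivAt besselI1 (∑' k, T1' k x) x := by
  have hmem : x ∈ Ioo (-(|x|+2)) (|x|+2) := by
    constructor <;> cases abs_cases x <;> linarith [abs_nonneg x]
  exact hasDerivAt_tsum_of_isPreconnected
    (summable_Crk 1 (((|x|+2)/2)^2)) isOpen_Ioo (convex_Ioo _ _).isPreconnected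
    (fun n y _ => hasDerivAt_T1 n y)
    (fun n y hy => by
      rw [Real.norm_eq_abs]
      exact bound_T1' y (|x|+2) (by linarith [abs_nonneg x])
        (by rw [abs_le]; exact ⟨hy.1.le, hy.2.le⟩) n)
    hmem (summable_T1 x) hmem

lemma besselI0_hasDerivAt₀ (x : ℝ) : HasDerivAt besselI0 (∑' k, T0' k x) x := by
  have hmem : x ∈ Ioo (-(|x|+2)) (|x|+2) := by
    constructor <;> cases abs_cases x <;> linarith [abs_nonneg x]
  exact hasDerivAt_tsum_of_isPreconnected
    (summable_Crk 1 (((|x|+2)/2)^2)) isOpen_Ioo (convex_Ioo _ _).isPreconnected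
    (fun n y _ => hasDerivAt_T0 n y)
    (fun n y hy => by
      rw [Real.norm_eq_abs]
      exact bound_T0' y (|x|+2) (by linarith [abs_nonneg x])
        (by rw [abs_le]; exact ⟨hy.1.le, hy.2.le⟩) n)
    hmem (summable_T0 x) hmem

lemma tsum_T0'_eq (x : ℝ) : ∑' k, T0' k x = besselI1 x := by
  rw [Summable.tsum_eq_zero_add (summable_T0' x)]
  have h0 : T0' 0 x = 0 := by simp [T0']
  rw [h0, zero_add, besselI1_eq]
  congr 1
  funext j
  rw [T0', T1]
  have he : 2*(j+1) - 1 = 2*j+1 := by omega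
  rw [he]
  have hf : (Nat.factorial (j+1) : ℝ) = ((j:ℝ)+1) * (Nat.factorial j : ℝ) := by
    rw [Nat.factorial_succ]; push_cast; ring
  rw [hf]
  have h1 := fact_pos j
  field_simp
  push_cast
  ring

lemma besselI0_hasDerivAt (x : ℝ) : HasDerivAt besselI0 (besselI1 x) x := by
  have := besselI0_hasDerivAt₀ x
  rwa [tsum_T0'_eq] at this

lemma tsum_T1'_eq (x : ℝ) (hx : x ≠ 0) :
    ∑' k, T1' k x = besselI0 x - besselI1 x / x := by
  have h1 : besselI1 x / x = ∑' k, T1 k x / x := by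
    rw [besselI1_eq, tsum_div_const]
  rw [besselI0_eq, h1, ← Summable.tsum_sub (summable_T0 x) ((summable_T1 x).div_const x)]
  congr 1
  funext k
  rw [T0, T1, T1']
  have hpow : (x/2)^(2*k+1) = (x/2)^(2*k) * (x/2) := pow_succ _ _
  rw [hpow]
  have hf : (Nat.factorial (k+1) : ℝ) = ((k:ℝ)+1) * (Nat.factorial k : ℝ) := by
    rw [Nat.factorial_succ]; push_cast; ring
  rw [hf]
  have h1 := fact_pos k
  field_simp
  ring

lemma besselI1_hasDerivAt' (x : ℝ) (hx : x ≠ 0) :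
    HasDerivAt besselI1 (besselI0 x - besselI1 x / x) x := by
  have := besselI1_hasDerivAt x
  rwa [tsum_T1'_eq x hx] at this

lemma besselI1_continuous : Continuous besselI1 :=
  continuous_iff_continuousAt.mpr fun x =>
    (besselI1_hasDerivAt x).differentiableAt.continuousAt

lemma besselI0_continuous : Continuous besselI0 :=
  continuous_iff_continuousAt.mpr fun x =>
    (besselI0_hasDerivAt x).differentiableAt.continuousAt

lemma T1_nonneg (k : ℕ) (x : ℝ) (hx : 0 ≤ x) : 0 ≤ T1 k x := by
  rw [T1]
  have : (0:ℝ) ≤ x/2 := by linarith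
  positivity

lemma T0_nonneg (k : ℕ) (x : ℝ) : 0 ≤ T0 k x := by
  rw [T0, pow_mul]
  positivity

lemma T1'_nonneg (k : ℕ) (x : ℝ) : 0 ≤ T1' k x := by
  rw [T1', pow_mul]
  positivity

lemma besselI1_ge (x : ℝ) (hx : 0 ≤ x) : x/2 ≤ besselI1 x := by
  have h := Summable.le_tsum (summable_T1 x) 0 (fun j _ => T1_nonneg j x hx)
  rw [besselI1_eq]
  refine le_trans (le_of_eq ?_) h
  rw [T1]
  norm_num [Nat.factorial]

lemma besselI0_ge_one (x : ℝ) : 1 ≤ besselI0 x := by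
  have h := Summable.le_tsum (summable_T0 x) 0 (fun j _ => T0_nonneg j x)
  rw [besselI0_eq]
  refine le_trans (le_of_eq ?_) h
  rw [T0]
  norm_num [Nat.factorial]

lemma besselI1_pos (x : ℝ) (hx : 0 < x) : 0 < besselI1 x :=
  lt_of_lt_of_le (by linarith) (besselI1_ge x hx.le)

lemma besselI0_pos (x : ℝ) : 0 < besselI0 x :=
  lt_of_lt_of_le one_pos (besselI0_ge_one x)

lemma besselI1_le_small (x : ℝ) (h0 : 0 ≤ x) (h1 : x ≤ 1) : besselI1 x ≤ 2/3 * x := by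
  have hterm : ∀ k, T1 k x ≤ (x/2) * (1/4 : ℝ)^k := by
    intro k
    rw [T1]
    have hc : (1:ℝ) / ((Nat.factorial k : ℝ) * (Nat.factorial (k+1) : ℝ)) ≤ 1 := by
      rw [div_le_one (by positivity)]
      nlinarith [one_le_fact k, one_le_fact (k+1)]
    have hpow : (x/2) ^ (2*k+1) ≤ (x/2) * (1/4:ℝ)^k := by
      rw [pow_add, pow_one, pow_mul]
      have h2 : (x/2)^2 ≤ (1/4:ℝ) := by nlinarith
      have := pow_le_pow_left₀ (by positivity : (0:ℝ) ≤ (x/2)^2) h2 k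
      have hx2 : (0:ℝ) ≤ x/2 := by linarith
      calc ((x/2)^2)^k * (x/2) ≤ (1/4:ℝ)^k * (x/2) :=
            mul_le_mul_of_nonneg_right this hx2
        _ = (x/2) * (1/4:ℝ)^k := by ring
    calc (1 / ((Nat.factorial k : ℝ) * (Nat.factorial (k+1) : ℝ))) * (x/2)^(2*k+1)
        ≤ 1 * (x/2)^(2*k+1) := by
          apply mul_le_mul_of_nonneg_right hc
          positivity
      _ = (x/2)^(2*k+1) := by ring
      _ ≤ (x/2) * (1/4:ℝ)^k := hpow
  have hsum : Summable (fun k => (x/2) * (1/4 : ℝ)^k) :=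
    (summable_geometric_of_lt_one (by norm_num) (by norm_num)).mul_left _
  have := Summable.tsum_le_tsum hterm (summable_T1 x) hsum
  rw [besselI1_eq]
  refine le_trans this (le_of_eq ?_)
  rw [tsum_mul_left, tsum_geometric_of_lt_one (by norm_num) (by norm_num)]
  norm_num
  ring

lemma nat_fact_ineq (k : ℕ) :
    Nat.factorial (2*k) ≤ 4^k * Nat.factorial k * Nat.factorial (k+1) := by
  induction k with
  | zero => simp [Nat.factorial]
  | succ n ih =>
      have h1 : 2*(n+1) = 2*n+1+1 := by omega
      rw [h1, Nat.factorial_succ, Nat.factorial_succ (2*n)]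
      have h2 : (2*n+1+1) * ((2*n+1) * Nat.factorial (2*n))
          ≤ (2*n+1+1) * ((2*n+1) * (4^n * Nat.factorial n * Nat.factorial (n+1))) := by
        apply Nat.mul_le_mul_left
        apply Nat.mul_le_mul_left
        exact ih
      refine le_trans h2 ?_
      rw [Nat.factorial_succ (n+1), pow_succ]
      have h3 : (2*n+1+1) * (2*n+1) ≤ 4 * ((n+1) * (n+2)) := by nlinarith
      calc (2*n+1+1) * ((2*n+1) * (4^n * Nat.factorial n * Nat.factorial (n+1)))
          = ((2*n+1+1) * (2*n+1)) * (4^n * Nat.factorial n * Nat.factorial (n+1)) := by ring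
        _ ≤ (4 * ((n+1) * (n+2))) * (4^n * Nat.factorial n * Nat.factorial (n+1)) :=
            Nat.mul_le_mul_right _ h3
        _ = 4^n * 4 * ((n+1) * Nat.factorial n) * ((n+2) * Nat.factorial (n+1)) := by ring
        _ = 4^n * 4 * Nat.factorial (n+1) * ((n+2) * Nat.factorial (n+1)) := by
            rw [Nat.factorial_succ]
  
lemma fact_ineq (k : ℕ) : ((Nat.factorial (2*k) : ℝ)) ≤
    4^k * (Nat.factorial k : ℝ) * (Nat.factorial (k+1) : ℝ) := by
  exact_mod_cast nat_fact_ineq k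

lemma besselI1_le_cosh (x : ℝ) (hx : 0 ≤ x) : besselI1 x ≤ x/2 * Real.cosh x := by
  have hterm : ∀ k, T1 k x ≤ (x/2) * (x^(2*k) / (Nat.factorial (2*k) : ℝ)) := by
    intro k
    rw [T1]
    have hpow : (x/2)^(2*k+1) = (x/2) * (x^(2*k) / 4^k) := by
      rw [pow_add, pow_one, pow_mul, div_pow]
      norm_num
      rw [div_pow, ← pow_mul]
      ring
    rw [hpow]
    rw [mul_comm (1 / ((Nat.factorial k : ℝ) * (Nat.factorial (k+1) : ℝ))), mul_assoc]
    apply mul_le_mul_of_nonneg_left _ (by linarith)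
    rw [div_mul_div_comm, mul_one, div_le_div_iff₀ (by positivity) (fact_pos (2*k))]
    have hmul := mul_le_mul_of_nonneg_left (fact_ineq k) (pow_nonneg hx (2*k))
    nlinarith [hmul]
  have hsum2 : Summable (fun k : ℕ => x^(2*k) / (Nat.factorial (2*k) : ℝ)) :=
    (Real.hasSum_cosh x).summable
  have := Summable.tsum_le_tsum hterm (summable_T1 x) (hsum2.mul_left (x/2))
  rw [besselI1_eq]
  refine le_trans this (le_of_eq ?_)
  rw [tsum_mul_left, ← Real.cosh_eq_tsum]

noncomputable def EE (x : ℝ) (k : ℕ) : ℝ := x * T0 k x - 2 * T1 k x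
noncomputable def FF (x : ℝ) (k : ℕ) : ℝ := x * T1 k x
noncomputable def FFm (x : ℝ) (k : ℕ) : ℝ := if k = 0 then 0 else FF x (k-1)
noncomputable def GG (x : ℝ) (k : ℕ) : ℝ := (1/2) * FF x k + (1/2) * FFm x k

lemma summable_FF (x : ℝ) : Summable (FF x) := (summable_T1 x).mul_left x

lemma summable_FFm (x : ℝ) : Summable (FFm x) := by
  apply (summable_nat_add_iff 1).mp
  have : (fun n => FFm x (n + 1)) = FF x := by
    funext n
    simp [FFm]
  rw [this]
  exact summable_FF x

lemma tsum_FFm (x : ℝ) : ∑' k, FFm x k = ∑' k, FF x k := by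
  rw [Summable.tsum_eq_zero_add (summable_FFm x)]
  simp [FFm]

lemma summable_GG (x : ℝ) : Summable (GG x) :=
  ((summable_FF x).mul_left _).add ((summable_FFm x).mul_left _)

lemma tsum_GG (x : ℝ) : ∑' k, GG x k = ∑' k, FF x k := by
  calc ∑' k, GG x k = (∑' k, (1/2) * FF x k) + ∑' k, (1/2) * FFm x k :=
        Summable.tsum_add ((summable_FF x).mul_left _) ((summable_FFm x).mul_left _)
    _ = (1/2) * (∑' k, FF x k) + (1/2) * ∑' k, FFm x k := by
        rw [tsum_mul_left, tsum_mul_left]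
    _ = ∑' k, FF x k := by rw [tsum_FFm]; ring

lemma EE_lt_GG0 (x : ℝ) (hx : 0 < x) : EE x 0 < GG x 0 := by
  simp only [EE, GG, FF, FFm, if_pos, T0, T1]
  norm_num [Nat.factorial]
  nlinarith

lemma EE_le_GG (x : ℝ) (hx : 0 < x) (k : ℕ) : EE x k ≤ GG x k := by
  cases k with
  | zero => exact (EE_lt_GG0 x hx).le
  | succ j =>
      simp only [EE, GG, FF, FFm, Nat.succ_ne_zero, if_false, Nat.add_sub_cancel, T0, T1]
      have e1 : (x/2)^(2*(j+1)) = (x/2)^(2*j+1) * (x/2) := by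
        rw [show 2*(j+1) = (2*j+1)+1 by omega, pow_succ]
      have e2 : (x/2)^(2*(j+1)+1) = (x/2)^(2*j+1) * (x/2)^2 := by
        rw [show 2*(j+1)+1 = (2*j+1)+2 by omega, pow_add]
      rw [e1, e2]
      have hf1 : (Nat.factorial (j+1) : ℝ) = ((j:ℝ)+1) * (Nat.factorial j : ℝ) := by
        rw [Nat.factorial_succ]; push_cast; ring
      have hf2 : (Nat.factorial (j+2) : ℝ) = ((j:ℝ)+2) * (Nat.factorial (j+1) : ℝ) := by
        rw [show j+2 = (j+1)+1 from rfl, Nat.factorial_succ]; push_cast; ring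
      have hfj := fact_pos j
      have hfj1 := fact_pos (j+1)
      set p := (x/2)^(2*j+1) with hp
      have hppos : 0 < p := by rw [hp]; positivity
      have hkey : 2*((j:ℝ)+1)*(x/2) ≤ (x/2)^2 + ((j:ℝ)+1)*((j:ℝ)+2) := by
        nlinarith [sq_nonneg (x/2 - ((j:ℝ)+1))]
      rw [hf2, hf1]
      have hclear := mul_le_mul_of_nonneg_right hkey hppos.le
      have hb : (0:ℝ) < (Nat.factorial j : ℝ) * (((j:ℝ)+1) * (Nat.factorial j : ℝ)) *
          (((j:ℝ)+2) * (((j:ℝ)+1) * (Nat.factorial j : ℝ))) := by positivity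
      have hApos : (0:ℝ) < 1 / (((j:ℝ) + 1) * (Nat.factorial j:ℝ) *
          (((j:ℝ) + 2) * (((j:ℝ) + 1) * (Nat.factorial j:ℝ)))) := by positivity
      set A := 1 / (((j:ℝ) + 1) * (Nat.factorial j:ℝ) *
          (((j:ℝ) + 2) * (((j:ℝ) + 1) * (Nat.factorial j:ℝ)))) with hAdef
      have hc0 : 1 / (((j:ℝ) + 1) * (Nat.factorial j:ℝ) * (((j:ℝ) + 1) * (Nat.factorial j:ℝ)))
          = ((j:ℝ) + 2) * A := by
        rw [hAdef]
        field_simp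
      have hcj : 1 / ((Nat.factorial j:ℝ) * (((j:ℝ) + 1) * (Nat.factorial j:ℝ)))
          = ((j:ℝ) + 1) * (((j:ℝ) + 2) * A) := by
        rw [hAdef]
        field_simp
      rw [hc0, hcj]
      nlinarith [mul_le_mul_of_nonneg_right hclear hApos.le]

lemma claimA (x : ℝ) (hx : 0 < x) : x * besselI0 x < (x+2) * besselI1 x := by
  have hE : Summable (EE x) :=
    ((summable_T0 x).mul_left x).sub ((summable_T1 x).mul_left 2)
  have hlt : ∑' k, EE x k < ∑' k, GG x k :=
    Summable.tsum_lt_tsum (fun k => EE_le_GG x hx k) (EE_lt_GG0 x hx) hE (summable_GG x)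
  have h1 : ∑' k, EE x k = x * besselI0 x - 2 * besselI1 x := by
    rw [besselI0_eq, besselI1_eq, ← tsum_mul_left, ← tsum_mul_left,
      ← Summable.tsum_sub ((summable_T0 x).mul_left x) ((summable_T1 x).mul_left 2)]
    rfl
  have h2 : ∑' k, FF x k = x * besselI1 x := by
    rw [besselI1_eq, ← tsum_mul_left]
    rfl
  rw [h1, tsum_GG x, h2] at hlt
  linarith

noncomputable def W (x : ℝ) : ℝ := 2*x*besselI0 x - (2*x+1)*besselI1 x

lemma W_continuous : Continuous W :=
  ((continuous_const.mul continuous_id).mul besselI0_continuous).sub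
    (((continuous_const.mul continuous_id).add continuous_const).mul besselI1_continuous)

lemma W_hasDerivAt (x : ℝ) (hx : x ≠ 0) :
    HasDerivAt W (2*besselI0 x + 2*x*besselI1 x -
      (2*besselI1 x + (2*x+1)*(besselI0 x - besselI1 x / x))) x := by
  have h0 := besselI0_hasDerivAt x
  have h1 := besselI1_hasDerivAt' x hx
  have ha : HasDerivAt (fun y => 2*y*besselI0 y) (2*besselI0 x + 2*x*besselI1 x) x := by
    have := ((hasDerivAt_id x).const_mul 2).mul h0
    simp only [id_eq] at this
    refine this.congr_deriv ?_
    ring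
  have hb : HasDerivAt (fun y => (2*y+1)*besselI1 y)
      (2*besselI1 x + (2*x+1)*(besselI0 x - besselI1 x / x)) x := by
    have := (((hasDerivAt_id x).const_mul 2).add_const 1).mul h1
    simp only [id_eq] at this
    refine this.congr_deriv ?_
    ring
  exact ha.sub hb

lemma W_pos_small (x : ℝ) (h0 : 0 < x) (h1 : x < 1) : 0 < W x := by
  have hI0 := besselI0_ge_one x
  have hI1 := besselI1_le_small x h0.le h1.le
  have hI1pos := besselI1_pos x h0
  rw [W]
  nlinarith

lemma W_pos (x : ℝ) (hx : 0 < x) : 0 < W x := by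
  by_contra hW
  push_neg at hW
  have hx1 : 1 ≤ x := by
    by_contra h
    push_neg at h
    exact absurd (W_pos_small x hx h) (not_lt.mpr hW)
  set C := Icc 1 x ∩ {y | W y ≤ 0} with hC
  have hCne : C.Nonempty := ⟨x, ⟨hx1, le_refl x⟩, hW⟩
  have hCcomp : IsCompact C :=
    isCompact_Icc.inter_right (isClosed_le W_continuous continuous_const)
  set s := sInf C with hs
  have hsC : s ∈ C := hCcomp.sInf_mem hCne
  have hs1 : 1 ≤ s := hsC.1.1
  have hspos : 0 < s := lt_of_lt_of_le one_pos hs1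
  have hsx : s ≤ x := hsC.1.2
  have hWs : W s ≤ 0 := hsC.2
  have hWpos : ∀ y, 0 < y → y < s → 0 < W y := by
    intro y hy hys
    rcases lt_or_ge y 1 with h|h
    · exact W_pos_small y hy h
    · by_contra hneg
      push_neg at hneg
      have hyC : y ∈ C := ⟨⟨h, le_trans hys.le hsx⟩, hneg⟩
      have := csInf_le hCcomp.bddBelow hyC
      rw [← hs] at this
      linarith
  have hWs0 : W s = 0 := by
    have htend : Filter.Tendsto W (nhdsWithin s (Iio s)) (nhds (W s)) :=
      (W_continuous.continuousAt).tendsto.mono_left nhdsWithin_le_nhds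
    have hev : ∀ᶠ y in nhdsWithin s (Iio s), 0 ≤ W y := by
      filter_upwards [Ioo_mem_nhdsLT_of_mem (⟨hspos, le_refl s⟩ : s ∈ Ioc 0 s)] with y hy
      exact (hWpos y hy.1 hy.2).le
    have := ge_of_tendsto htend hev
    linarith
  have hI1s : (2*s+1) * besselI1 s = 2*s*besselI0 s := by
    rw [W] at hWs0
    linarith
  have hd := W_hasDerivAt s (ne_of_gt hspos)
  have hd2 : HasDerivAt W ((3 - 2*s)*besselI0 s + (2*s - 2)*besselI1 s) s := by
    convert hd using 1
    have hs' : s ≠ 0 := ne_of_gt hspos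
    field_simp
    linear_combination (-1 : ℝ) * hI1s
  have hdpos : 0 < (3 - 2*s)*besselI0 s + (2*s - 2)*besselI1 s := by
    have h3 : ((3 - 2*s)*besselI0 s + (2*s - 2)*besselI1 s) * (2*s+1) = 3 * besselI0 s := by
      linear_combination (2*s-2) * hI1s
    have hI0pos := besselI0_pos s
    nlinarith
  have hdnonpos : (3 - 2*s)*besselI0 s + (2*s - 2)*besselI1 s ≤ 0 := by
    have hslope := hasDerivAt_iff_tendsto_slope.mp hd2
    have hmono : Filter.Tendsto (slope W s) (nhdsWithin s (Iio s))
        (nhds ((3 - 2*s)*besselI0 s + (2*s - 2)*besselI1 s)) :=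
      hslope.mono_left (nhdsWithin_mono s (fun y hy => ne_of_lt hy))
    apply le_of_tendsto hmono
    filter_upwards [Ioo_mem_nhdsLT_of_mem (⟨hspos, le_refl s⟩ : s ∈ Ioc 0 s)] with y hy
    rw [slope_def_field]
    apply div_nonpos_of_nonneg_of_nonpos
    · rw [hWs0]
      exact sub_nonneg.mpr (hWpos y hy.1 hy.2).le
    · linarith [hy.2]
  linarith

noncomputable def gfun (x : ℝ) : ℝ := Real.exp (-x) * besselI1 x / x
noncomputable def hfun (x : ℝ) : ℝ := Real.exp (-x) * (Real.sqrt x * besselI1 x)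

lemma gfun_hasDerivAt (x : ℝ) (hx : 0 < x) :
    HasDerivAt gfun
      (((Real.exp (-x) * -1 * besselI1 x +
          Real.exp (-x) * (besselI0 x - besselI1 x / x)) * x -
        Real.exp (-x) * besselI1 x * 1) / x ^ 2) x := by
  have hnum : HasDerivAt (fun y => Real.exp (-y) * besselI1 y)
      (Real.exp (-x) * -1 * besselI1 x +
        Real.exp (-x) * (besselI0 x - besselI1 x / x)) x := by
    have he : HasDerivAt (fun y : ℝ => Real.exp (-y)) (Real.exp (-x) * -1) x :=
      (hasDerivAt_id x).neg.exp
    exact he.mul (besselI1_hasDerivAt' x hx.ne')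
  exact hnum.div (hasDerivAt_id x) hx.ne'

lemma gfun_deriv_neg (x : ℝ) (hx : 0 < x) : deriv gfun x < 0 := by
  rw [(gfun_hasDerivAt x hx).deriv]
  apply div_neg_of_neg_of_pos _ (by positivity)
  have he := Real.exp_pos (-x)
  have hI1 := besselI1_pos x hx
  have hA := claimA x hx
  have hlt := mul_lt_mul_of_pos_left hA he
  have hfrac : Real.exp (-x) * (besselI1 x / x) * x = Real.exp (-x) * besselI1 x := by
    rw [mul_assoc, div_mul_cancel₀ _ hx.ne']
  nlinarith [hlt, hfrac]

lemma gfun_anti : StrictAntiOn gfun (Ioi 0) := by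
  apply strictAntiOn_of_deriv_neg (convex_Ioi 0)
  · exact fun x hx => ((gfun_hasDerivAt x hx).differentiableAt.continuousAt.continuousWithinAt)
  · rw [interior_Ioi]
    exact fun x hx => gfun_deriv_neg x hx

lemma hfun_hasDerivAt (x : ℝ) (hx : 0 < x) :
    HasDerivAt hfun
      (Real.exp (-x) * -1 * (Real.sqrt x * besselI1 x) +
        Real.exp (-x) * ((1 / (2 * Real.sqrt x)) * besselI1 x +
          Real.sqrt x * (besselI0 x - besselI1 x / x))) x := by
  have he : HasDerivAt (fun y : ℝ => Real.exp (-y)) (Real.exp (-x) * -1) x :=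
    (hasDerivAt_id x).neg.exp
  exact he.mul ((Real.hasDerivAt_sqrt hx.ne').mul (besselI1_hasDerivAt' x hx.ne'))

lemma hfun_deriv_pos (x : ℝ) (hx : 0 < x) : 0 < deriv hfun x := by
  rw [(hfun_hasDerivAt x hx).deriv]
  have he := Real.exp_pos (-x)
  have hrpos : 0 < Real.sqrt x := Real.sqrt_pos.mpr hx
  have hr2 : Real.sqrt x * Real.sqrt x = x := Real.mul_self_sqrt hx.le
  have hsub : 1 / (2 * Real.sqrt x) = Real.sqrt x / (2 * x) := by
    rw [div_eq_div_iff (by positivity) (by positivity)]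
    nlinarith [hr2]
  rw [hsub]
  have hW := W_pos x hx
  rw [W] at hW
  have hxne : x ≠ 0 := hx.ne'
  have hrne : Real.sqrt x ≠ 0 := hrpos.ne'
  have heq2 : Real.exp (-x) * -1 * (Real.sqrt x * besselI1 x) +
      Real.exp (-x) * ((Real.sqrt x / (2 * x)) * besselI1 x +
        Real.sqrt x * (besselI0 x - besselI1 x / x)) =
      Real.exp (-x) * Real.sqrt x * (2*x*besselI0 x - (2*x+1)*besselI1 x) / (2*x) := by
    field_simp
    ring
  rw [heq2]
  exact div_pos (mul_pos (mul_pos he hrpos) hW) (by positivity)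

lemma hfun_mono : StrictMonoOn hfun (Ioi 0) := by
  apply strictMonoOn_of_deriv_pos (convex_Ioi 0)
  · exact fun x hx => ((hfun_hasDerivAt x hx).differentiableAt.continuousAt.continuousWithinAt)
  · rw [interior_Ioi]
    exact fun x hx => hfun_deriv_pos x hx

lemma exp_mul_exp_neg (x : ℝ) : Real.exp x * Real.exp (-x) = 1 := by
  rw [← Real.exp_add]
  simp

lemma exp_sub_eq (x y : ℝ) : Real.exp (x - y) = Real.exp x * Real.exp (-y) := by
  rw [← Real.exp_add]
  ring_nf

end BesselAux

open BesselAux in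
theorem stmt_16 :
    (∀ x y : ℝ, 0 < x → x < y →
      Real.exp (x - y) * (x / y) < besselI1 x / besselI1 y
        ∧ besselI1 x / besselI1 y < Real.exp (x - y) * Real.sqrt (y / x))
    ∧ (∀ x : ℝ, 0 < x →
        x / 2 ≤ besselI1 x ∧ besselI1 x ≤ (x / 2) * Real.cosh x)
    ∧ (∀ x : ℝ, 0 < x →
        0 ≤ deriv besselI1 x
          ∧ deriv besselI1 x ≤ besselI1 x + besselI1 x / x) := by
  refine ⟨fun x y hx hxy => ⟨?_, ?_⟩, fun x hx => ⟨besselI1_ge x hx.le, besselI1_le_cosh x hx.le⟩,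
    fun x hx => ⟨?_, ?_⟩⟩
  · -- left inequality of (i)
    have hy : 0 < y := hx.trans hxy
    have hI1y := besselI1_pos y hy
    have hg := gfun_anti (mem_Ioi.mpr hx) (mem_Ioi.mpr hy) hxy
    rw [gfun, gfun, div_lt_div_iff₀ hy hx] at hg
    rw [show Real.exp (x-y) * (x/y) = (Real.exp (x-y) * x) / y from by ring,
      div_lt_div_iff₀ hy hI1y]
    calc Real.exp (x-y) * x * besselI1 y
        = Real.exp x * (Real.exp (-y) * besselI1 y * x) := by rw [exp_sub_eq]; ring
      _ < Real.exp x * (Real.exp (-x) * besselI1 x * y) :=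
          mul_lt_mul_of_pos_left hg (Real.exp_pos x)
      _ = (Real.exp x * Real.exp (-x)) * (besselI1 x * y) := by ring
      _ = besselI1 x * y := by rw [exp_mul_exp_neg, one_mul]
  · -- right inequality of (i)
    have hy : 0 < y := hx.trans hxy
    have hI1y := besselI1_pos y hy
    have hrx : 0 < Real.sqrt x := Real.sqrt_pos.mpr hx
    have hh := hfun_mono (mem_Ioi.mpr hx) (mem_Ioi.mpr hy) hxy
    rw [hfun, hfun] at hh
    rw [Real.sqrt_div (le_of_lt hy) x,
      show Real.exp (x-y) * (Real.sqrt y / Real.sqrt x)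
        = (Real.exp (x-y) * Real.sqrt y) / Real.sqrt x from by ring,
      div_lt_div_iff₀ hI1y hrx]
    calc besselI1 x * Real.sqrt x
        = Real.exp x * (Real.exp (-x) * (Real.sqrt x * besselI1 x)) := by
          rw [show Real.exp x * (Real.exp (-x) * (Real.sqrt x * besselI1 x))
            = (Real.exp x * Real.exp (-x)) * (Real.sqrt x * besselI1 x) from by ring,
            exp_mul_exp_neg, one_mul]
          exact mul_comm _ _
      _ < Real.exp x * (Real.exp (-y) * (Real.sqrt y * besselI1 y)) :=
          mul_lt_mul_of_pos_left hh (Real.exp_pos x)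
      _ = Real.exp (x-y) * Real.sqrt y * besselI1 y := by rw [exp_sub_eq]; ring
  · -- (iii) lower
    rw [(besselI1_hasDerivAt x).deriv]
    exact tsum_nonneg (fun k => T1'_nonneg k x)
  · -- (iii) upper
    rw [(besselI1_hasDerivAt' x hx.ne').deriv]
    have hA := claimA x hx
    have hq : besselI1 x / x * x = besselI1 x := div_mul_cancel₀ _ hx.ne'
    nlinarith [hA, hq, hx]
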